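/- If Q is a clique cover of a chordal graph G consisting of maximal cliques, and T is a clique tree of G, then every leaf of T belongs to Q. -/

import Mathlib

open SimpleGraph

variable {V : Type*}

/-- A graph is chordal if it has no induced cycle of length at least four. -/
def Chordal (G : SimpleGraph V) : Prop :=
  ∀ n : ℕ, 4 ≤ n → IsEmpty (SimpleGraph.cycleGraph n ↪g G)

/-- `C` is a maximal clique of `G`. -/
def IsMaxClique (G : SimpleGraph V) (C : Set V) : Prop :=
  G.IsClique C ∧ ∀ D : Set V, G.IsClique D → C ⊆ D → D = C

/-- A clique tree of a chordal graph `G`: a tree on the maximal cliques of `G`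
such that for every vertex `v` of `G` the maximal cliques containing `v` induce
a (connected) subtree. -/
def IsCliqueTree (G : SimpleGraph V) (T : SimpleGraph {C : Set V // IsMaxClique G C}) : Prop :=
  T.IsTree ∧ ∀ v : V, (T.induce {C : {C : Set V // IsMaxClique G C} | v ∈ (C : Set V)}).Connected

/-- A leaf of a tree: a vertex with exactly one neighbour. -/
def IsTreeLeaf {α : Type*} (T : SimpleGraph α) (C : α) : Prop := ∃! C', T.Adj C C'


private lemma exists_adj_of_reachable' {α : Type*} {G : SimpleGraph α} {a b : α}
    (h : G.Reachable a b) (hne : a ≠ b) : ∃ c, G.Adj a c := by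
  obtain ⟨w⟩ := h
  cases w with
  | nil => exact absurd rfl hne
  | cons h p => exact ⟨_, h⟩

/-- Every leaf of a clique tree belongs to any clique cover by
maximal cliques. -/
theorem cliqueTree_leaf_mem_cliqueCover [Fintype V] (G : SimpleGraph V) (hG : Chordal G)
    (Q : Set {C : Set V // IsMaxClique G C}) (hQ : ∀ v : V, ∃ C ∈ Q, v ∈ (C : Set V))
    (T : SimpleGraph {C : Set V // IsMaxClique G C}) (hT : IsCliqueTree G T)
    (C : {C : Set V // IsMaxClique G C}) (hC : IsTreeLeaf T C) : C ∈ Q := by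
  obtain ⟨C', hadj, huniq⟩ := hC
  have hne : C ≠ C' := fun h => T.loopless.irrefl C (h ▸ hadj)
  have hsub : ¬ (C : Set V) ⊆ (C' : Set V) := by
    intro h
    exact hne (Subtype.ext (C.2.2 C' C'.2.1 h).symm)
  obtain ⟨v, hvC, hvC'⟩ := Set.not_subset.mp hsub
  obtain ⟨D, hDQ, hvD⟩ := hQ v
  have hDC : D = C := by
    by_contra hDC
    have hreach := (hT.2 v).preconnected
      (⟨C, hvC⟩ : {C : {C : Set V // IsMaxClique G C} | v ∈ (C : Set V)}) ⟨D, hvD⟩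
    obtain ⟨c, hc⟩ := exists_adj_of_reachable' hreach
      (by simp [Subtype.ext_iff]; exact fun h => hDC (Subtype.ext h.symm))
    have : (c : {C : Set V // IsMaxClique G C}) = C' := huniq _ (by exact hc)
    exact hvC' (this ▸ c.2)
  exact hDC ▸ hDQ
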